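/- Let d ≥ 1 be an integer, σ > 0, and m ∈ ℝ^d. Let C = (∫_{ℝ^d} e^{−‖x−m‖/σ} dx)^{−1}, so that f(x) = C·e^{−‖x−m‖/σ} is a probability density with respect to Lebesgue measure on ℝ^d (the multivariate Euclidean Laplace density with location m and scale σ). Then ∫_{ℝ^d} ‖x − m‖² f(x) dx = d(d+1)·σ². -/

import Mathlib

open MeasureTheory

open Metric Set in
/-- Second moment of the multivariate Euclidean Laplace distribution on `ℝ^d` with
location `m` and scale `σ`: if `f(x) = C·e^{−‖x−m‖/σ}` is the normalized density,
then `∫ ‖x − m‖² f(x) dx = d(d+1)σ²`. -/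
theorem euclidean_laplace_second_moment (d : ℕ) (hd : 1 ≤ d) (σ : ℝ) (hσ : 0 < σ)
    (m : EuclideanSpace ℝ (Fin d)) (C : ℝ)
    (hC : C = (∫ x : EuclideanSpace ℝ (Fin d), Real.exp (-‖x - m‖ / σ))⁻¹) :
    ∫ x : EuclideanSpace ℝ (Fin d), ‖x - m‖ ^ 2 * (C * Real.exp (-‖x - m‖ / σ)) =
      (d : ℝ) * ((d : ℝ) + 1) * σ ^ 2 := by
  have hd0 : 0 < d := hd
  haveI : Nontrivial (EuclideanSpace ℝ (Fin d)) :=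
    Module.nontrivial_of_finrank_pos (R := ℝ) (by simpa using hd0)
  set c := (volume (ball (0 : EuclideanSpace ℝ (Fin d)) 1)).toReal with hc_def
  have hc : 0 < c := ENNReal.toReal_pos (measure_ball_pos _ _ one_pos).ne' measure_ball_lt_top.ne
  have hdim : Module.finrank ℝ (EuclideanSpace ℝ (Fin d)) = d := finrank_euclideanSpace_fin
  have key : ∀ g : ℝ → ℝ, (∫ x : EuclideanSpace ℝ (Fin d), g ‖x - m‖) =
      d • c • ∫ r in Ioi (0 : ℝ), r ^ (d - 1) • g r := by
    intro g
    have h1 : (∫ x : EuclideanSpace ℝ (Fin d), g ‖x - m‖) =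
        ∫ x : EuclideanSpace ℝ (Fin d), g ‖x‖ :=
      integral_sub_right_eq_self (fun x => g ‖x‖) m
    rw [h1, integral_fun_norm_addHaar volume g, hdim]
    rfl
  have hden : (∫ r in Ioi (0 : ℝ), r ^ (d - 1) • Real.exp (-r / σ))
      = σ ^ d * (d - 1).factorial := by
    have hcong : ∀ r ∈ Ioi (0 : ℝ), r ^ (d - 1) • Real.exp (-r / σ)
        = r ^ ((d : ℝ) - 1) * Real.exp (-(σ⁻¹ * r)) := by
      intro r hr
      rw [smul_eq_mul, show (d : ℝ) - 1 = ((d - 1 : ℕ) : ℝ) by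
        push_cast [Nat.cast_sub hd]; ring, Real.rpow_natCast]
      ring_nf
    rw [setIntegral_congr_fun measurableSet_Ioi hcong,
      Real.integral_rpow_mul_exp_neg_mul_Ioi (by exact_mod_cast hd0) (inv_pos.2 hσ)]
    rw [show (d : ℝ) = ((d - 1 : ℕ) : ℝ) + 1 by push_cast [Nat.cast_sub hd]; ring,
      Real.Gamma_nat_eq_factorial]
    rw [one_div, inv_inv, ← Real.rpow_natCast σ d]
    congr 1
    rw [Nat.cast_sub hd]; push_cast; ring
  have hnum : (∫ r in Ioi (0 : ℝ), r ^ (d - 1) • (r ^ 2 * Real.exp (-r / σ)))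
      = σ ^ (d + 2) * (d + 1).factorial := by
    have hcong : ∀ r ∈ Ioi (0 : ℝ), r ^ (d - 1) • (r ^ 2 * Real.exp (-r / σ))
        = r ^ (((d : ℝ) + 2) - 1) * Real.exp (-(σ⁻¹ * r)) := by
      intro r hr
      rw [smul_eq_mul, show ((d : ℝ) + 2) - 1 = ((d + 1 : ℕ) : ℝ) by push_cast; ring,
        Real.rpow_natCast, show d + 1 = (d - 1) + 2 by omega, pow_add]
      ring_nf
    rw [setIntegral_congr_fun measurableSet_Ioi hcong,
      Real.integral_rpow_mul_exp_neg_mul_Ioi (by positivity) (inv_pos.2 hσ)]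
    rw [show (d : ℝ) + 2 = ((d + 1 : ℕ) : ℝ) + 1 by push_cast; ring,
      Real.Gamma_nat_eq_factorial]
    rw [one_div, inv_inv, ← Real.rpow_natCast σ (d + 2)]
    congr 1
    push_cast; ring
  have hCval : C = ((d : ℝ) * (c * (σ ^ d * (d - 1).factorial)))⁻¹ := by
    rw [hC, key (fun r => Real.exp (-r / σ)), hden, nsmul_eq_mul, smul_eq_mul]
  have hlhs : (∫ x : EuclideanSpace ℝ (Fin d), ‖x - m‖ ^ 2 * (C * Real.exp (-‖x - m‖ / σ)))
      = C * ((d : ℝ) * (c * (σ ^ (d + 2) * (d + 1).factorial))) := by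
    simp_rw [mul_left_comm _ C]
    rw [integral_const_mul, key (fun r => r ^ 2 * Real.exp (-r / σ)), hnum,
      nsmul_eq_mul, smul_eq_mul]
  rw [hlhs, hCval]
  have hfac : ((d + 1).factorial : ℝ) = ((d : ℝ) + 1) * d * (d - 1).factorial := by
    rw [show d + 1 = (d - 1) + 1 + 1 by omega, Nat.factorial_succ, Nat.factorial_succ]
    push_cast [Nat.cast_sub hd]
    ring
  have hfacpos : (0 : ℝ) < (d - 1).factorial := by exact_mod_cast (d - 1).factorial_pos
  have hdpos : (0 : ℝ) < d := by exact_mod_cast hd0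
  rw [hfac, pow_add]
  field_simp
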